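/- Under the standing assumptions (graph conditions G1–G4 and potential conditions A1–A2), for any λ > 1 and p > 2, the infimum m_λ of J_λ over the Nehari manifold N_λ is achieved by some u_λ ∈ N_λ. -/

import Mathlib

open Filter Topology

structure GraphData (V : Type*) where
  ω : V → V → ℝ
  μ : V → ℝ
  sym : ∀ x y, ω x y = ω y x
  nonneg : ∀ x y, 0 ≤ ω x y
  loopless : ∀ x, ω x x = 0
  locfin : ∀ x, {y | ω x y ≠ 0}.Finite
  μpos : ∀ x, 0 < μ x

variable {V : Type*}

noncomputable def GraphData.lap (g : GraphData V) (u : V → ℝ) (x : V) : ℝ :=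
  (1 / g.μ x) * ∑' y, g.ω x y * (u y - u x)

noncomputable def GraphData.grad (g : GraphData V) (u v : V → ℝ) (x : V) : ℝ :=
  (1 / (2 * g.μ x)) * ∑' y, g.ω x y * (u y - u x) * (v y - v x)

noncomputable def GraphData.integral (g : GraphData V) (f : V → ℝ) : ℝ :=
  ∑' x, g.μ x * f x

def GraphData.G (g : GraphData V) : SimpleGraph V where
  Adj x y := 0 < g.ω x y
  symm := ⟨by intro x y h; rwa [g.sym y x]⟩
  loopless := ⟨by intro x h; simp [g.loopless x] at h⟩

noncomputable def GraphData.enormSq (g : GraphData V) (a : V → ℝ) (lam : ℝ) (u : V → ℝ) : ℝ :=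
  ∑' x, g.μ x * ((g.lap u x) ^ 2 + g.grad u u x + (lam * a x + 1) * (u x) ^ 2)

def GraphData.memE (g : GraphData V) (a : V → ℝ) (lam : ℝ) (u : V → ℝ) : Prop :=
  Summable fun x => g.μ x * ((g.lap u x) ^ 2 + g.grad u u x + (lam * a x + 1) * (u x) ^ 2)

noncomputable def GraphData.lpInt (g : GraphData V) (p : ℝ) (u : V → ℝ) : ℝ :=
  ∑' x, g.μ x * |u x| ^ p

noncomputable def GraphData.Jlam (g : GraphData V) (a : V → ℝ) (lam p : ℝ) (u : V → ℝ) : ℝ :=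
  (1 / 2) * g.enormSq a lam u - (1 / p) * g.lpInt p u

def GraphData.Nehari (g : GraphData V) (a : V → ℝ) (lam p : ℝ) : Set (V → ℝ) :=
  {u | u ≠ 0 ∧ g.memE a lam u ∧ g.enormSq a lam u = g.lpInt p u}

noncomputable def GraphData.Jderiv (g : GraphData V) (a : V → ℝ) (lam p : ℝ) (u φ : V → ℝ) : ℝ :=
  (∑' x, g.μ x * (g.lap u x * g.lap φ x + g.grad u φ x + (lam * a x + 1) * u x * φ x))
    - ∑' x, g.μ x * (|u x| ^ (p - 2) * u x * φ x)

def GraphData.bdry (g : GraphData V) (Ω : Set V) : Set V :=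
  {y | y ∉ Ω ∧ ∃ x ∈ Ω, 0 < g.ω x y}

noncomputable def GraphData.hnormSq (g : GraphData V) (Ω : Set V) (u : V → ℝ) : ℝ :=
  (∑' x : ↥(Ω ∪ g.bdry Ω), g.μ x * ((g.lap u x) ^ 2 + g.grad u u x))
    + ∑' x : Ω, g.μ x * (u x) ^ 2

noncomputable def GraphData.lpIntO (g : GraphData V) (Ω : Set V) (p : ℝ) (u : V → ℝ) : ℝ :=
  ∑' x : Ω, g.μ x * |u x| ^ p

noncomputable def GraphData.JOmega (g : GraphData V) (Ω : Set V) (p : ℝ) (u : V → ℝ) : ℝ :=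
  (1 / 2) * g.hnormSq Ω u - (1 / p) * g.lpIntO Ω p u

def GraphData.memH (g : GraphData V) (Ω : Set V) (u : V → ℝ) : Prop :=
  ∀ x ∉ Ω, u x = 0

def GraphData.NehariO (g : GraphData V) (Ω : Set V) (p : ℝ) : Set (V → ℝ) :=
  {u | u ≠ 0 ∧ g.memH Ω u ∧ g.hnormSq Ω u = g.lpIntO Ω p u}

noncomputable def GraphData.JderivO (g : GraphData V) (Ω : Set V) (p : ℝ) (u φ : V → ℝ) : ℝ :=
  (∑' x : ↥(Ω ∪ g.bdry Ω), g.μ x * (g.lap u x * g.lap φ x + g.grad u φ x))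
    + (∑' x : Ω, g.μ x * (u x * φ x))
    - ∑' x : Ω, g.μ x * (|u x| ^ (p - 2) * u x * φ x)

section Aux

variable {V : Type*}

noncomputable def phiF (g : GraphData V) (a : V → ℝ) (lam : ℝ) (u : V → ℝ) (x : V) : ℝ :=
  g.μ x * ((g.lap u x) ^ 2 + g.grad u u x + (lam * a x + 1) * (u x) ^ 2)

lemma enormSq_eq_tsum (g : GraphData V) (a : V → ℝ) (lam : ℝ) (u : V → ℝ) :
    g.enormSq a lam u = ∑' x, phiF g a lam u x := rfl

lemma memE_iff (g : GraphData V) (a : V → ℝ) (lam : ℝ) (u : V → ℝ) :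
    g.memE a lam u ↔ Summable (phiF g a lam u) := Iff.rfl

lemma grad_self_nonneg (g : GraphData V) (u : V → ℝ) (x : V) : 0 ≤ g.grad u u x := by
  unfold GraphData.grad
  apply mul_nonneg
  · have := g.μpos x
    positivity
  · refine tsum_nonneg fun y => ?_
    rw [mul_assoc]
    exact mul_nonneg (g.nonneg x y) (mul_self_nonneg _)

lemma phiF_nonneg (g : GraphData V) {a : V → ℝ} {lam : ℝ} (hlam : 0 ≤ lam)
    (ha : ∀ x, 0 ≤ a x) (u : V → ℝ) (x : V) : 0 ≤ phiF g a lam u x := by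
  have h1 := grad_self_nonneg g u x
  have h2 := (g.μpos x).le
  have h3 := sq_nonneg (g.lap u x)
  have h4 : 0 ≤ lam * a x := mul_nonneg hlam (ha x)
  have h5 := sq_nonneg (u x)
  have h6 : 0 ≤ (lam * a x + 1) * (u x) ^ 2 := mul_nonneg (by linarith) h5
  unfold phiF
  nlinarith

lemma mu_lam_sq_le_phiF (g : GraphData V) {a : V → ℝ} {lam : ℝ} (hlam : 0 ≤ lam)
    (ha : ∀ x, 0 ≤ a x) (u : V → ℝ) (x : V) :
    g.μ x * ((lam * a x + 1) * (u x) ^ 2) ≤ phiF g a lam u x := by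
  have h1 := grad_self_nonneg g u x
  have h2 := (g.μpos x).le
  have h3 := sq_nonneg (g.lap u x)
  unfold phiF
  nlinarith

lemma mu_sq_le_phiF (g : GraphData V) {a : V → ℝ} {lam : ℝ} (hlam : 0 ≤ lam)
    (ha : ∀ x, 0 ≤ a x) (u : V → ℝ) (x : V) :
    g.μ x * (u x) ^ 2 ≤ phiF g a lam u x := by
  refine le_trans ?_ (mu_lam_sq_le_phiF g hlam ha u x)
  have h2 := (g.μpos x).le
  have h4 : 0 ≤ lam * a x := mul_nonneg hlam (ha x)
  have h5 := sq_nonneg (u x)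
  nlinarith [mul_nonneg h4 h5, mul_nonneg h2 (mul_nonneg h4 h5)]

lemma mumin_sq_le_phiF (g : GraphData V) {a : V → ℝ} {lam μmin : ℝ} (hlam : 0 ≤ lam)
    (ha : ∀ x, 0 ≤ a x) (hμ : ∀ x, μmin ≤ g.μ x) (u : V → ℝ) (x : V) :
    μmin * (u x) ^ 2 ≤ phiF g a lam u x := by
  refine le_trans ?_ (mu_sq_le_phiF g hlam ha u x)
  exact mul_le_mul_of_nonneg_right (hμ x) (sq_nonneg _)

lemma lap_eq_sum (g : GraphData V) (u : V → ℝ) (x : V) :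
    g.lap u x = (1 / g.μ x) * ∑ y ∈ (g.locfin x).toFinset, g.ω x y * (u y - u x) := by
  unfold GraphData.lap
  congr 1
  refine tsum_eq_sum fun y hy => ?_
  rw [Set.Finite.mem_toFinset, Set.mem_setOf_eq, not_not] at hy
  rw [hy, zero_mul]

lemma grad_eq_sum (g : GraphData V) (u v : V → ℝ) (x : V) :
    g.grad u v x = (1 / (2 * g.μ x)) *
      ∑ y ∈ (g.locfin x).toFinset, g.ω x y * (u y - u x) * (v y - v x) := by
  unfold GraphData.grad
  congr 1
  refine tsum_eq_sum fun y hy => ?_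
  rw [Set.Finite.mem_toFinset, Set.mem_setOf_eq, not_not] at hy
  rw [hy, zero_mul, zero_mul]

lemma tendsto_lap (g : GraphData V) {w : ℕ → V → ℝ} {u : V → ℝ}
    (h : ∀ y, Filter.Tendsto (fun n => w n y) Filter.atTop (𝓝 (u y))) (x : V) :
    Filter.Tendsto (fun n => g.lap (w n) x) Filter.atTop (𝓝 (g.lap u x)) := by
  simp only [lap_eq_sum]
  exact tendsto_const_nhds.mul
    (tendsto_finset_sum _ fun y _ => tendsto_const_nhds.mul ((h y).sub (h x)))

lemma tendsto_grad (g : GraphData V) {w : ℕ → V → ℝ} {u : V → ℝ}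
    (h : ∀ y, Filter.Tendsto (fun n => w n y) Filter.atTop (𝓝 (u y))) (x : V) :
    Filter.Tendsto (fun n => g.grad (w n) (w n) x) Filter.atTop (𝓝 (g.grad u u x)) := by
  simp only [grad_eq_sum]
  exact tendsto_const_nhds.mul
    (tendsto_finset_sum _ fun y _ =>
      (tendsto_const_nhds.mul ((h y).sub (h x))).mul ((h y).sub (h x)))

lemma tendsto_phiF (g : GraphData V) (a : V → ℝ) (lam : ℝ) {w : ℕ → V → ℝ} {u : V → ℝ}
    (h : ∀ y, Filter.Tendsto (fun n => w n y) Filter.atTop (𝓝 (u y))) (x : V) :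
    Filter.Tendsto (fun n => phiF g a lam (w n) x) Filter.atTop (𝓝 (phiF g a lam u x)) := by
  unfold phiF
  exact tendsto_const_nhds.mul
    ((((tendsto_lap g h x).pow 2).add (tendsto_grad g h x)).add
      (tendsto_const_nhds.mul ((h x).pow 2)))

lemma lap_smul (g : GraphData V) (t : ℝ) (u : V → ℝ) (x : V) :
    g.lap (fun y => t * u y) x = t * g.lap u x := by
  unfold GraphData.lap
  have : (∑' y, g.ω x y * (t * u y - t * u x)) = ∑' y, t * (g.ω x y * (u y - u x)) :=
    tsum_congr fun y => by ring
  rw [this, tsum_mul_left]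
  ring

lemma grad_smul (g : GraphData V) (t : ℝ) (u : V → ℝ) (x : V) :
    g.grad (fun y => t * u y) (fun y => t * u y) x = t ^ 2 * g.grad u u x := by
  unfold GraphData.grad
  have : (∑' y, g.ω x y * (t * u y - t * u x) * (t * u y - t * u x))
      = ∑' y, t ^ 2 * (g.ω x y * (u y - u x) * (u y - u x)) :=
    tsum_congr fun y => by ring
  rw [this, tsum_mul_left]
  ring

lemma phiF_smul (g : GraphData V) (a : V → ℝ) (lam t : ℝ) (u : V → ℝ) (x : V) :
    phiF g a lam (fun y => t * u y) x = t ^ 2 * phiF g a lam u x := by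
  unfold phiF
  rw [lap_smul, grad_smul]
  ring

lemma enormSq_smul (g : GraphData V) (a : V → ℝ) (lam t : ℝ) (u : V → ℝ) :
    g.enormSq a lam (fun y => t * u y) = t ^ 2 * g.enormSq a lam u := by
  rw [enormSq_eq_tsum, enormSq_eq_tsum, ← tsum_mul_left]
  exact tsum_congr fun x => phiF_smul g a lam t u x

lemma memE_smul (g : GraphData V) (a : V → ℝ) (lam t : ℝ) {u : V → ℝ}
    (hu : g.memE a lam u) : g.memE a lam (fun y => t * u y) := by
  rw [memE_iff] at hu ⊢
  have : phiF g a lam (fun y => t * u y) = fun x => t ^ 2 * phiF g a lam u x :=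
    funext fun x => phiF_smul g a lam t u x
  rw [this]
  exact hu.mul_left _

lemma abs_rpow_split {p : ℝ} (hp : 2 < p) (t : ℝ) :
    |t| ^ p = |t| ^ (p - 2) * t ^ 2 := by
  rcases eq_or_ne t 0 with rfl | ht
  · rw [abs_zero, Real.zero_rpow (by linarith), Real.zero_rpow (by linarith)]
    ring
  · have h0 : 0 < |t| := abs_pos.2 ht
    rw [← sq_abs t, ← Real.rpow_two, ← Real.rpow_add h0]
    norm_num

lemma lpInt_smul (g : GraphData V) {p t : ℝ} (hp : 0 < t) (u : V → ℝ) :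
    g.lpInt p (fun y => t * u y) = t ^ p * g.lpInt p u := by
  unfold GraphData.lpInt
  rw [← tsum_mul_left]
  refine tsum_congr fun x => ?_
  rw [abs_mul, Real.mul_rpow (abs_nonneg t) (abs_nonneg (u x)), abs_of_pos hp]
  ring

-- pointwise comparison: μ|u|^p ≤ c · phi
lemma lp_summand_le_phiF (g : GraphData V) {a : V → ℝ} {lam p c : ℝ} (hlam : 0 ≤ lam)
    (ha : ∀ x, 0 ≤ a x) (hp : 2 < p) {u : V → ℝ}
    (hc0 : 0 ≤ c) (hc : ∀ x, |u x| ^ (p - 2) ≤ c) (x : V) :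
    g.μ x * |u x| ^ p ≤ c * phiF g a lam u x := by
  have h1 : g.μ x * |u x| ^ p = (|u x| ^ (p - 2)) * (g.μ x * (u x) ^ 2) := by
    rw [abs_rpow_split hp]; ring
  rw [h1]
  have h2 : g.μ x * (u x) ^ 2 ≤ phiF g a lam u x := mu_sq_le_phiF g hlam ha u x
  have h3 : 0 ≤ g.μ x * (u x) ^ 2 := mul_nonneg (g.μpos x).le (sq_nonneg _)
  exact mul_le_mul (hc x) h2 h3 hc0

lemma lpInt_summable (g : GraphData V) {a : V → ℝ} {lam p c : ℝ} (hlam : 0 ≤ lam)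
    (ha : ∀ x, 0 ≤ a x) (hp : 2 < p) {u : V → ℝ} (hu : g.memE a lam u)
    (hc0 : 0 ≤ c) (hc : ∀ x, |u x| ^ (p - 2) ≤ c) :
    Summable (fun x => g.μ x * |u x| ^ p) := by
  refine Summable.of_nonneg_of_le
    (fun x => mul_nonneg (g.μpos x).le (Real.rpow_nonneg (abs_nonneg _) _))
    (fun x => lp_summand_le_phiF g hlam ha hp hc0 hc x) ?_
  exact ((memE_iff g a lam u).mp hu).mul_left c

-- uniform pointwise bound from energy bound
lemma abs_le_sqrt_of_enorm_le (g : GraphData V) {a : V → ℝ} {lam μmin K : ℝ}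
    (hμmin : 0 < μmin) (hlam : 0 ≤ lam) (ha : ∀ x, 0 ≤ a x) (hμ : ∀ x, μmin ≤ g.μ x)
    {u : V → ℝ} (hu : g.memE a lam u) (hK : g.enormSq a lam u ≤ K) (x : V) :
    |u x| ≤ Real.sqrt (K / μmin) := by
  have h1 : μmin * (u x) ^ 2 ≤ K := by
    refine le_trans (mumin_sq_le_phiF g hlam ha hμ u x) (le_trans ?_ hK)
    rw [enormSq_eq_tsum]
    exact Summable.le_tsum ((memE_iff g a lam u).mp hu) x (fun y _ => phiF_nonneg g hlam ha u y)
  have h2 : (u x) ^ 2 ≤ K / μmin := (le_div_iff₀' hμmin).mpr h1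
  calc |u x| = Real.sqrt ((u x) ^ 2) := (Real.sqrt_sq_eq_abs _).symm
    _ ≤ Real.sqrt (K / μmin) := Real.sqrt_le_sqrt h2

-- lower bound on the Nehari manifold
lemma nehari_enorm_lb (g : GraphData V) {a : V → ℝ} {lam p μmin : ℝ}
    (hμmin : 0 < μmin) (hlam : 0 ≤ lam) (ha : ∀ x, 0 ≤ a x) (hμ : ∀ x, μmin ≤ g.μ x)
    (hp : 2 < p) {u : V → ℝ} (hu : u ∈ g.Nehari a lam p) :
    μmin ≤ g.enormSq a lam u := by
  obtain ⟨hu0, huE, huN⟩ := hu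
  set A := g.enormSq a lam u with hA
  have hAnn : 0 ≤ A := by
    rw [hA, enormSq_eq_tsum]; exact tsum_nonneg (fun x => phiF_nonneg g hlam ha u x)
  have hApos : 0 < A := by
    obtain ⟨x, hx⟩ : ∃ x, u x ≠ 0 := by
      by_contra h
      push_neg at h
      exact hu0 (funext h)
    have h1 : 0 < μmin * (u x) ^ 2 := mul_pos hμmin (by positivity)
    have h2 : μmin * (u x) ^ 2 ≤ A := by
      rw [hA, enormSq_eq_tsum]
      exact le_trans (mumin_sq_le_phiF g hlam ha hμ u x)
        (Summable.le_tsum ((memE_iff g a lam u).mp huE) x (fun y _ => phiF_nonneg g hlam ha u y))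
    linarith
  set c := (A / μmin) ^ ((p - 2) / 2) with hc
  have hcnn : 0 ≤ c := Real.rpow_nonneg (by positivity) _
  have hcb : ∀ x, |u x| ^ (p - 2) ≤ c := by
    intro x
    have hb := abs_le_sqrt_of_enorm_le g hμmin hlam ha hμ huE (le_refl A) x
    calc |u x| ^ (p - 2) ≤ (Real.sqrt (A / μmin)) ^ (p - 2) :=
          Real.rpow_le_rpow (abs_nonneg _) hb (by linarith)
      _ = c := by
          rw [hc, Real.sqrt_eq_rpow, ← Real.rpow_mul (by positivity)]
          ring_nf
  have hB : g.lpInt p u ≤ c * A := by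
    unfold GraphData.lpInt
    have hsum := lpInt_summable g hlam ha hp huE hcnn hcb
    calc (∑' x, g.μ x * |u x| ^ p) ≤ ∑' x, c * phiF g a lam u x :=
          Summable.tsum_le_tsum (fun x => lp_summand_le_phiF g hlam ha hp hcnn hcb x) hsum
            (((memE_iff g a lam u).mp huE).mul_left c)
      _ = c * A := by rw [tsum_mul_left, hA, enormSq_eq_tsum]
  have hAc : A ≤ c * A := le_trans (le_of_eq huN) hB
  have h1c : 1 ≤ c := by nlinarith
  have hdiv : 1 ≤ A / μmin := by
    by_contra h
    push_neg at h
    have h2 := Real.rpow_lt_one (by positivity) h (by linarith : (0:ℝ) < (p - 2) / 2)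
    rw [← hc] at h2
    linarith
  rw [le_div_iff₀ hμmin] at hdiv
  linarith

-- tail bound for the Lᵖ sum
lemma lp_tail_bound (g : GraphData V) {a : V → ℝ} {lam p c T : ℝ} (hlam : 0 ≤ lam)
    (ha : ∀ x, 0 ≤ a x) (hp : 2 < p) {u : V → ℝ} (hu : g.memE a lam u)
    (hc0 : 0 ≤ c) (hc : ∀ x, |u x| ^ (p - 2) ≤ c) (hT : 0 < T)
    {F : Finset V} (hF : ∀ x, x ∉ F → T ≤ lam * a x + 1) :
    (∑' x, g.μ x * |u x| ^ p) - ∑ x ∈ F, g.μ x * |u x| ^ p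
      ≤ c / T * g.enormSq a lam u := by
  have hsumphi : Summable (phiF g a lam u) := (memE_iff g a lam u).mp hu
  have hsum := lpInt_summable g hlam ha hp hu hc0 hc
  have hkey : ∀ x, x ∉ F → g.μ x * |u x| ^ p ≤ c / T * phiF g a lam u x := by
    intro x hx
    have h1 : g.μ x * |u x| ^ p = (|u x| ^ (p - 2)) * (g.μ x * (u x) ^ 2) := by
      rw [abs_rpow_split hp]; ring
    have h2 : T * (g.μ x * (u x) ^ 2) ≤ phiF g a lam u x := by
      refine le_trans ?_ (mu_lam_sq_le_phiF g hlam ha u x)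
      have h3 : 0 ≤ g.μ x * (u x) ^ 2 := mul_nonneg (g.μpos x).le (sq_nonneg _)
      calc T * (g.μ x * (u x) ^ 2) ≤ (lam * a x + 1) * (g.μ x * (u x) ^ 2) :=
            mul_le_mul_of_nonneg_right (hF x hx) h3
        _ = g.μ x * ((lam * a x + 1) * (u x) ^ 2) := by ring
    have h3 : 0 ≤ g.μ x * (u x) ^ 2 := mul_nonneg (g.μpos x).le (sq_nonneg _)
    have h4 : g.μ x * (u x) ^ 2 ≤ phiF g a lam u x / T := by
      rw [le_div_iff₀ hT]; linarith
    rw [h1]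
    calc (|u x| ^ (p - 2)) * (g.μ x * (u x) ^ 2) ≤ c * (phiF g a lam u x / T) :=
          mul_le_mul (hc x) h4 h3 hc0
      _ = c / T * phiF g a lam u x := by ring
  have hdec := Summable.sum_add_tsum_compl (s := F) hsum
  have h5 : (∑' x, g.μ x * |u x| ^ p) - ∑ x ∈ F, g.μ x * |u x| ^ p
      = ∑' x : ↑((↑F : Set V)ᶜ), g.μ ↑x * |u ↑x| ^ p := by linarith
  rw [h5]
  have h6 : ∑' x : ↑((↑F : Set V)ᶜ), g.μ ↑x * |u ↑x| ^ p
      ≤ ∑' x : ↑((↑F : Set V)ᶜ), c / T * phiF g a lam u ↑x := by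
    refine Summable.tsum_le_tsum (fun x => hkey ↑x (fun hm => x.2 (Finset.mem_coe.mpr hm))) ?_ ?_
    · exact hsum.subtype _
    · exact (hsumphi.mul_left (c / T)).subtype _
  refine le_trans h6 ?_
  rw [tsum_mul_left]
  have h7 : ∑' x : ↑((↑F : Set V)ᶜ), phiF g a lam u ↑x ≤ g.enormSq a lam u := by
    have hdec2 := Summable.sum_add_tsum_compl (s := F) hsumphi
    have h8 : 0 ≤ ∑ x ∈ F, phiF g a lam u x :=
      Finset.sum_nonneg (fun x _ => phiF_nonneg g hlam ha u x)
    rw [enormSq_eq_tsum]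
    have h9 : (∑' x : ↑((↑F : Set V)ᶜ), phiF g a lam u ↑x) ≤ ∑' x, phiF g a lam u x := by
      linarith
    exact h9
  exact mul_le_mul_of_nonneg_left h7 (div_nonneg hc0 hT.le)

-- graph lemmas: balls are finite, V is countable
lemma ball_finite (g : GraphData V) (hconn : g.G.Connected) (x₀ : V) :
    ∀ n : ℕ, {x : V | g.G.dist x x₀ ≤ n}.Finite := by
  intro n
  induction n with
  | zero =>
    refine Set.Finite.subset (Set.finite_singleton x₀) ?_
    intro x hx
    simp only [Set.mem_setOf_eq, Nat.le_zero] at hx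
    exact (hconn.dist_eq_zero_iff).mp hx
  | succ n ih =>
    refine Set.Finite.subset (ih.union (ih.biUnion (fun y _ => g.locfin y))) ?_
    intro x hx
    simp only [Set.mem_setOf_eq] at hx
    by_cases hle : g.G.dist x x₀ ≤ n
    · exact Or.inl hle
    · right
      have hd : g.G.dist x x₀ = n + 1 := le_antisymm hx (not_le.mp hle)
      obtain ⟨w, hw⟩ := (hconn.preconnected x x₀).exists_walk_length_eq_dist
      rw [hd] at hw
      cases w with
      | nil => simp at hw
      | cons hadj q =>
        rename_i y
        simp only [SimpleGraph.Walk.length_cons, Nat.add_right_cancel_iff] at hw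
        refine Set.mem_biUnion (show g.G.dist y x₀ ≤ n by rw [← hw]; exact g.G.dist_le q) ?_
        have : 0 < g.ω x y := hadj
        rw [g.sym x y] at this
        exact ne_of_gt this
  
lemma countable_of_connected (g : GraphData V) (hconn : g.G.Connected) (x₀ : V) :
    Countable V := by
  rw [← Set.countable_univ_iff]
  have h : (Set.univ : Set V) ⊆ ⋃ n : ℕ, {x : V | g.G.dist x x₀ ≤ n} := by
    intro x _
    exact Set.mem_iUnion.mpr ⟨g.G.dist x x₀, by simp⟩
  exact Set.Countable.mono h (Set.countable_iUnion (fun n => (ball_finite g hconn x₀ n).countable))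

open Filter in
lemma tendsto_tsum_of_tail {f : ℕ → V → ℝ} {h : V → ℝ}
    (hfnn : ∀ n x, 0 ≤ f n x) (hhnn : ∀ x, 0 ≤ h x)
    (hfs : ∀ n, Summable (f n)) (hhs : Summable h)
    (hpt : ∀ x, Tendsto (fun n => f n x) atTop (𝓝 (h x)))
    (htail : ∀ ε : ℝ, 0 < ε → ∃ F : Finset V,
      (∀ n, (∑' x, f n x) - ∑ x ∈ F, f n x ≤ ε) ∧ (∑' x, h x) - ∑ x ∈ F, h x ≤ ε) :
    Tendsto (fun n => ∑' x, f n x) atTop (𝓝 (∑' x, h x)) := by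
  rw [Metric.tendsto_atTop]
  intro ε hε
  obtain ⟨F, hF1, hF2⟩ := htail (ε / 4) (by linarith)
  have hS : Tendsto (fun n => ∑ x ∈ F, f n x) atTop (𝓝 (∑ x ∈ F, h x)) :=
    tendsto_finset_sum _ fun x _ => hpt x
  obtain ⟨N, hN⟩ := (Metric.tendsto_atTop.mp hS) (ε / 4) (by linarith)
  refine ⟨N, fun n hn => ?_⟩
  have h3 : |(∑ x ∈ F, f n x) - ∑ x ∈ F, h x| < ε / 4 := by
    simpa [Real.dist_eq] using hN n hn
  obtain ⟨h3a, h3b⟩ := abs_lt.mp h3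
  have h4 : 0 ≤ (∑' x, f n x) - ∑ x ∈ F, f n x :=
    sub_nonneg.2 (Summable.sum_le_tsum F (fun x _ => hfnn n x) (hfs n))
  have h5 : 0 ≤ (∑' x, h x) - ∑ x ∈ F, h x :=
    sub_nonneg.2 (Summable.sum_le_tsum F (fun x _ => hhnn x) hhs)
  rw [Real.dist_eq, abs_lt]
  constructor
  · have := hF2
    nlinarith [hF1 n]
  · nlinarith [hF1 n]

-- J on the Nehari manifold
lemma nehari_J (g : GraphData V) {a : V → ℝ} {lam p : ℝ} {u : V → ℝ}
    (hu : u ∈ g.Nehari a lam p) :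
    g.Jlam a lam p u = (1 / 2 - 1 / p) * g.enormSq a lam u := by
  unfold GraphData.Jlam
  rw [← hu.2.2]
  ring

-- scaling onto the Nehari manifold
lemma scale_to_nehari (g : GraphData V) {a : V → ℝ} {lam p : ℝ} (hp : 2 < p)
    {u : V → ℝ} (hu0 : u ≠ 0) (huE : g.memE a lam u)
    (hA : 0 < g.enormSq a lam u) (hB : 0 < g.lpInt p u) :
    ∃ t : ℝ, 0 < t ∧ t = (g.enormSq a lam u / g.lpInt p u) ^ (1 / (p - 2)) ∧
      (fun y => t * u y) ∈ g.Nehari a lam p ∧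
      g.enormSq a lam (fun y => t * u y) = t ^ 2 * g.enormSq a lam u := by
  set A := g.enormSq a lam u
  set B := g.lpInt p u
  have hp2 : (0:ℝ) < p - 2 := by linarith
  set t := (A / B) ^ (1 / (p - 2)) with htdef
  have hAB : 0 < A / B := div_pos hA hB
  have ht : 0 < t := Real.rpow_pos_of_pos hAB _
  have htp2 : t ^ (p - 2) = A / B := by
    rw [htdef, ← Real.rpow_mul hAB.le]
    rw [one_div_mul_cancel (ne_of_gt hp2), Real.rpow_one]
  have htp : t ^ p = (A / B) * t ^ (2:ℕ) := by
    have : p = (p - 2) + 2 := by ring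
    rw [this, Real.rpow_add ht, htp2, Real.rpow_two]
  refine ⟨t, ht, rfl, ⟨?_, ?_, ?_⟩, enormSq_smul g a lam t u⟩
  · obtain ⟨x, hx⟩ : ∃ x, u x ≠ 0 := by
      by_contra hcon
      push_neg at hcon
      exact hu0 (funext hcon)
    intro hcontr
    have hz := congrFun hcontr x
    simp only [Pi.zero_apply] at hz
    exact (mul_ne_zero (ne_of_gt ht) hx) hz
  · exact memE_smul g a lam t huE
  · rw [enormSq_smul g a lam t u, lpInt_smul g ht u, htp]
    have hBne : B ≠ 0 := ne_of_gt hB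
    field_simp
    ring

lemma nehari_nonempty (g : GraphData V) {a : V → ℝ} {lam p μmin : ℝ}
    (hμmin : 0 < μmin) (hlam : 0 ≤ lam) (ha : ∀ x, 0 ≤ a x) (hμ : ∀ x, μmin ≤ g.μ x)
    (hp : 2 < p) (x₀ : V) : (g.Nehari a lam p).Nonempty := by
  classical
  set δ : V → ℝ := fun y => if y = x₀ then (1:ℝ) else 0 with hδdef
  have hδx₀ : δ x₀ = 1 := if_pos rfl
  have hδ0 : δ ≠ 0 := by
    intro hc
    have h := congrFun hc x₀
    rw [hδx₀] at h
    simp at h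
  have hvan : ∀ x ∉ insert x₀ (g.locfin x₀).toFinset, phiF g a lam δ x = 0 := by
    intro x hx
    simp only [Finset.mem_insert, Set.Finite.mem_toFinset, Set.mem_setOf_eq, not_or,
      not_not] at hx
    obtain ⟨hx1, hx2⟩ := hx
    have hωx : g.ω x x₀ = 0 := by rw [g.sym]; exact hx2
    have hδx : δ x = 0 := if_neg hx1
    have hterm : ∀ y, g.ω x y * (δ y - δ x) = 0 := by
      intro y
      rcases eq_or_ne y x₀ with rfl | hy
      · rw [hωx, zero_mul]
      · rw [hδx, show δ y = 0 from if_neg hy]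
        ring
    have hlap : g.lap δ x = 0 := by
      unfold GraphData.lap
      rw [tsum_congr hterm, tsum_zero, mul_zero]
    have hgrad : g.grad δ δ x = 0 := by
      unfold GraphData.grad
      have : ∀ y, g.ω x y * (δ y - δ x) * (δ y - δ x) = 0 := by
        intro y
        rw [hterm y, zero_mul]
      rw [tsum_congr this, tsum_zero, mul_zero]
    unfold phiF
    rw [hlap, hgrad, hδx]
    ring
  have hmem : g.memE a lam δ := (memE_iff g a lam δ).mpr (summable_of_ne_finset_zero hvan)
  have hA : μmin ≤ g.enormSq a lam δ := by
    rw [enormSq_eq_tsum]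
    refine le_trans ?_ (Summable.le_tsum ((memE_iff g a lam δ).mp hmem) x₀
      (fun y _ => phiF_nonneg g hlam ha δ y))
    have h := mumin_sq_le_phiF g hlam ha hμ δ x₀
    rw [hδx₀] at h
    simpa using h
  have hB : g.lpInt p δ = g.μ x₀ := by
    unfold GraphData.lpInt
    rw [tsum_eq_single x₀ (fun y hy => by
      rw [show δ y = 0 from if_neg hy, abs_zero, Real.zero_rpow (by linarith : p ≠ 0), mul_zero])]
    rw [hδx₀, abs_one, Real.one_rpow, mul_one]
  obtain ⟨t, _, _, htN, _⟩ := scale_to_nehari g hp hδ0 hmem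
    (lt_of_lt_of_le hμmin hA) (hB ▸ g.μpos x₀)
  exact ⟨_, htN⟩

end Aux

/-- m_λ is achieved on the Nehari manifold. -/
theorem stmt8 (g : GraphData V) (μmin C lam p : ℝ) (hμmin : 0 < μmin)
    (hμ : ∀ x, μmin ≤ g.μ x) (hω : ∀ x, ∑' y, g.ω x y ≤ C) (hconn : g.G.Connected)
    (a : V → ℝ) (ha : ∀ x, 0 ≤ a x)
    (hΩne : {x | a x = 0}.Nonempty)
    (hΩbd : ∃ D : ℕ, ∀ x ∈ {x | a x = 0}, ∀ y ∈ {x | a x = 0}, g.G.dist x y ≤ D)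
    (hΩconn : (g.G.induce {x | a x = 0}).Connected)
    (x₀ : V) (hainf : ∀ M : ℝ, ∃ R : ℕ, ∀ x, R ≤ g.G.dist x x₀ → M ≤ a x)
    (hlam : 1 < lam) (hp : 2 < p) :
    ∃ u ∈ g.Nehari a lam p, ∀ v ∈ g.Nehari a lam p,
      g.Jlam a lam p u ≤ g.Jlam a lam p v := by
  classical
  have hlam0 : 0 ≤ lam := by linarith
  have hp2 : (0:ℝ) < p - 2 := by linarith
  have hp0 : (0:ℝ) < p := by linarith
  haveI : Countable V := countable_of_connected g hconn x₀
  set S : Set ℝ := (g.enormSq a lam) '' (g.Nehari a lam p) with hS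
  have hSne : S.Nonempty := (nehari_nonempty g hμmin hlam0 ha hμ hp x₀).image _
  have hSlb : ∀ s ∈ S, μmin ≤ s := by
    rintro s ⟨u, hu, rfl⟩
    exact nehari_enorm_lb g hμmin hlam0 ha hμ hp hu
  have hSbdd : BddBelow S := ⟨μmin, fun s hs => hSlb s hs⟩
  set m := sInf S with hm
  have hmlb : μmin ≤ m := le_csInf hSne hSlb
  have hmpos : 0 < m := lt_of_lt_of_le hμmin hmlb
  -- minimizing sequence
  have hseq : ∀ n : ℕ, ∃ u, u ∈ g.Nehari a lam p ∧
      g.enormSq a lam u < m + 1 / ((n : ℝ) + 1) := by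
    intro n
    have hlt : m < m + 1 / ((n : ℝ) + 1) := lt_add_of_pos_right m (by positivity)
    obtain ⟨s, hsS, hslt⟩ := (csInf_lt_iff hSbdd hSne).mp hlt
    obtain ⟨u, hu, rfl⟩ := hsS
    exact ⟨u, hu, hslt⟩
  choose w hwN hwE using hseq
  set K := m + 1 with hK
  have hKpos : 0 < K := by linarith
  have hwEK : ∀ n, g.enormSq a lam (w n) ≤ K := by
    intro n
    have h1 : 1 / ((n : ℝ) + 1) ≤ 1 := by
      rw [div_le_one (by positivity)]
      linarith [Nat.cast_nonneg (α := ℝ) n]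
    have := hwE n
    rw [hK]
    linarith
  have hwm : ∀ n, m ≤ g.enormSq a lam (w n) := fun n => csInf_le hSbdd ⟨w n, hwN n, rfl⟩
  have hEtend : Filter.Tendsto (fun n => g.enormSq a lam (w n)) Filter.atTop (𝓝 m) := by
    refine tendsto_of_tendsto_of_tendsto_of_le_of_le tendsto_const_nhds ?_ hwm
      (fun n => (hwE n).le)
    have h2 : Filter.Tendsto (fun n : ℕ => 1 / ((n : ℝ) + 1)) Filter.atTop (𝓝 0) :=
      tendsto_one_div_add_atTop_nhds_zero_nat
    have h3 : Filter.Tendsto (fun n : ℕ => m + 1 / ((n : ℝ) + 1)) Filter.atTop (𝓝 (m + 0)) :=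
      Filter.Tendsto.add tendsto_const_nhds h2
    simpa using h3
  set M := Real.sqrt (K / μmin) with hM
  have hwb : ∀ n x, |w n x| ≤ M :=
    fun n x => abs_le_sqrt_of_enorm_le g hμmin hlam0 ha hμ (hwN n).2.1 (hwEK n) x
  have hcompact : IsCompact {f : V → ℝ | ∀ x, f x ∈ Set.Icc (-M) M} :=
    isCompact_pi_infinite (fun _ => isCompact_Icc)
  obtain ⟨u, hu_mem, φ, hφ, hφt⟩ := hcompact.isSeqCompact (x := w)
    (fun n x => Set.mem_Icc.mpr (abs_le.mp (hwb n x)))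
  have hpt : ∀ x, Filter.Tendsto (fun n => w (φ n) x) Filter.atTop (𝓝 (u x)) :=
    fun x => tendsto_pi_nhds.mp hφt x
  have hEφ : Filter.Tendsto (fun n => g.enormSq a lam (w (φ n))) Filter.atTop (𝓝 m) :=
    hEtend.comp hφ.tendsto_atTop
  have hphit : ∀ x, Filter.Tendsto (fun n => phiF g a lam (w (φ n)) x) Filter.atTop
      (𝓝 (phiF g a lam u x)) := fun x => tendsto_phiF g a lam hpt x
  -- Fatou-type bounds
  have hsum_le : ∀ F : Finset V, ∑ x ∈ F, phiF g a lam u x ≤ m := by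
    intro F
    refine le_of_tendsto_of_tendsto' (tendsto_finset_sum F (fun x _ => hphit x)) hEφ
      (fun n => ?_)
    rw [enormSq_eq_tsum]
    exact Summable.sum_le_tsum F (fun x _ => phiF_nonneg g hlam0 ha _ x)
      ((memE_iff _ _ _ _).mp (hwN (φ n)).2.1)
  have humemE : g.memE a lam u := (memE_iff _ _ _ _).mpr
    (summable_of_sum_le (fun x => phiF_nonneg g hlam0 ha u x) hsum_le)
  have huA_le : g.enormSq a lam u ≤ m := by
    rw [enormSq_eq_tsum]
    exact Summable.tsum_le_of_sum_le ((memE_iff _ _ _ _).mp humemE) hsum_le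
  have hub : ∀ x, |u x| ≤ M := fun x =>
    le_of_tendsto ((hpt x).abs) (Filter.Eventually.of_forall (fun n => hwb (φ n) x))
  set c := M ^ (p - 2) with hc
  have hM1 : (1:ℝ) ≤ M := by
    rw [hM]
    have h1 : (1:ℝ) ≤ K / μmin := (one_le_div hμmin).mpr (by linarith)
    calc (1:ℝ) = Real.sqrt 1 := Real.sqrt_one.symm
      _ ≤ Real.sqrt (K / μmin) := Real.sqrt_le_sqrt h1
  have hc1 : (1:ℝ) ≤ c := by
    rw [hc]
    calc (1:ℝ) = (1:ℝ) ^ (p - 2) := (Real.one_rpow _).symm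
      _ ≤ M ^ (p - 2) := Real.rpow_le_rpow zero_le_one hM1 hp2.le
  have hc0 : (0:ℝ) ≤ c := by linarith
  have hcpos : (0:ℝ) < c := by linarith
  have hcw : ∀ n x, |w n x| ^ (p - 2) ≤ c :=
    fun n x => Real.rpow_le_rpow (abs_nonneg _) (hwb n x) hp2.le
  have hcu : ∀ x, |u x| ^ (p - 2) ≤ c :=
    fun x => Real.rpow_le_rpow (abs_nonneg _) (hub x) hp2.le
  -- strong Lᵖ convergence
  have hlp : Filter.Tendsto (fun n => g.lpInt p (w (φ n))) Filter.atTop (𝓝 (g.lpInt p u)) := by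
    refine tendsto_tsum_of_tail (f := fun n x => g.μ x * |w (φ n) x| ^ p)
      (h := fun x => g.μ x * |u x| ^ p)
      (fun n x => mul_nonneg (g.μpos x).le (Real.rpow_nonneg (abs_nonneg _) _))
      (fun x => mul_nonneg (g.μpos x).le (Real.rpow_nonneg (abs_nonneg _) _))
      (fun n => lpInt_summable g hlam0 ha hp (hwN (φ n)).2.1 hc0 (hcw (φ n)))
      (lpInt_summable g hlam0 ha hp humemE hc0 hcu)
      (fun x => tendsto_const_nhds.mul (((hpt x).abs).rpow_const (Or.inr hp0.le)))
      ?_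
    intro ε hε
    set T := c * K / ε with hT
    have hTpos : 0 < T := by positivity
    obtain ⟨R, hR⟩ := hainf T
    refine ⟨(ball_finite g hconn x₀ R).toFinset, ?_, ?_⟩
    · intro n
      have hF : ∀ x, x ∉ (ball_finite g hconn x₀ R).toFinset → T ≤ lam * a x + 1 := by
        intro x hx
        rw [Set.Finite.mem_toFinset, Set.mem_setOf_eq, not_le] at hx
        have h1 : T ≤ a x := hR x hx.le
        nlinarith [ha x, mul_le_mul_of_nonneg_right hlam.le (ha x)]
      have h2 := lp_tail_bound g hlam0 ha hp (hwN (φ n)).2.1 hc0 (hcw (φ n)) hTpos hF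
      refine le_trans h2 ?_
      have h3 : c / T * g.enormSq a lam (w (φ n)) ≤ c / T * K :=
        mul_le_mul_of_nonneg_left (hwEK (φ n)) (div_nonneg hc0 hTpos.le)
      refine le_trans h3 (le_of_eq ?_)
      rw [hT]
      field_simp
    · have hF : ∀ x, x ∉ (ball_finite g hconn x₀ R).toFinset → T ≤ lam * a x + 1 := by
        intro x hx
        rw [Set.Finite.mem_toFinset, Set.mem_setOf_eq, not_le] at hx
        have h1 : T ≤ a x := hR x hx.le
        nlinarith [ha x, mul_le_mul_of_nonneg_right hlam.le (ha x)]
      have h2 := lp_tail_bound g hlam0 ha hp humemE hc0 hcu hTpos hF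
      refine le_trans h2 ?_
      have h3 : c / T * g.enormSq a lam u ≤ c / T * K :=
        mul_le_mul_of_nonneg_left (le_trans huA_le (by linarith)) (div_nonneg hc0 hTpos.le)
      refine le_trans h3 (le_of_eq ?_)
      rw [hT]
      field_simp
  have hlpm : Filter.Tendsto (fun n => g.lpInt p (w (φ n))) Filter.atTop (𝓝 m) :=
    hEφ.congr (fun n => (hwN (φ n)).2.2)
  have hlpu : g.lpInt p u = m := tendsto_nhds_unique hlp hlpm
  have hu0 : u ≠ 0 := by
    intro hcon
    have hz : g.lpInt p u = 0 := by
      rw [hcon]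
      unfold GraphData.lpInt
      simp [Real.zero_rpow (ne_of_gt hp0)]
    rw [hlpu] at hz
    linarith
  have hApos : 0 < g.enormSq a lam u := by
    obtain ⟨x, hx⟩ : ∃ x, u x ≠ 0 := by
      by_contra hcon
      push_neg at hcon
      exact hu0 (funext hcon)
    have h1 : 0 < μmin * (u x) ^ 2 := mul_pos hμmin (by positivity)
    have h2 : μmin * (u x) ^ 2 ≤ g.enormSq a lam u := by
      rw [enormSq_eq_tsum]
      exact le_trans (mumin_sq_le_phiF g hlam0 ha hμ u x)
        (Summable.le_tsum ((memE_iff _ _ _ _).mp humemE) x (fun y _ => phiF_nonneg g hlam0 ha u y))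
    linarith
  have hBpos : 0 < g.lpInt p u := by rw [hlpu]; exact hmpos
  obtain ⟨t, htpos, htdef, htN, htE⟩ := scale_to_nehari g hp hu0 humemE hApos hBpos
  refine ⟨_, htN, ?_⟩
  intro v hv
  rw [nehari_J g htN, nehari_J g hv]
  have ht1 : t ≤ 1 := by
    rw [htdef]
    refine Real.rpow_le_one (div_nonneg hApos.le hBpos.le) ?_ (by positivity)
    rw [div_le_one hBpos, hlpu]
    exact huA_le
  have hE1 : g.enormSq a lam (fun y => t * u y) ≤ m := by
    rw [htE]
    have h4 : t ^ 2 ≤ 1 := pow_le_one₀ htpos.le ht1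
    calc t ^ 2 * g.enormSq a lam u ≤ 1 * g.enormSq a lam u :=
          mul_le_mul_of_nonneg_right h4 hApos.le
      _ = g.enormSq a lam u := one_mul _
      _ ≤ m := huA_le
  have hm_le : m ≤ g.enormSq a lam v := csInf_le hSbdd ⟨v, hv, rfl⟩
  have hhalf : (0:ℝ) ≤ 1 / 2 - 1 / p := by
    have h5 : 1 / p ≤ 1 / 2 := one_div_le_one_div_of_le two_pos hp.le
    linarith
  exact mul_le_mul_of_nonneg_left (le_trans hE1 hm_le) hhalf
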